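/- arXiv:1011.2008 — 2 statements merged into one kernel-verified Lean document; each statement's English description precedes it below -/
import Mathlib

section
/- There exist constants C₁ = C₁(m) > 0 and C₂ = C₂(m) > 0 such that: for every ρ > 0, ε ∈ (0,1), δ ∈ (0,1), every m-dimensional linear subspace V of ℝⁿ, and every ρεδ-basis (v₁,…,v_m) of V, if (v̂₁,…,v̂_m) is the ortho-ρ-normal basis arising from (v₁,…,v_m) by the Gram–Schmidt process, then |v_i − v̂_i| ≤ (C₁·ε + C₂·δ)·ρ for every i = 1,…,m. -/
open Metric MeasureTheory Filter
open scoped RealInnerProductSpace ENNReal NNReal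

noncomputable section

abbrev Euc (n : ℕ) := EuclideanSpace ℝ (Fin n)

variable {n : ℕ}

/-- Orthogonal projection onto a subspace, as a continuous linear map on the whole space. -/
noncomputable def projCLM (U : Submodule ℝ (Euc n)) : Euc n →L[ℝ] Euc n :=
  U.subtypeL.comp (U.orthogonalProjectionOnto)

/-- Orthogonal projection onto the orthogonal complement. -/
noncomputable def QCLM (U : Submodule ℝ (Euc n)) : Euc n →L[ℝ] Euc n :=
  projCLM Uᗮ

/-- The metric on the Grassmannian: operator norm distance of orthogonal projections. -/
noncomputable def dG (U V : Submodule ℝ (Euc n)) : ℝ :=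
  ‖projCLM U - projCLM V‖

/-- The cone with axis `Hᗮ` and "angle" `δ`. -/
def angCone (δ : ℝ) (H : Submodule ℝ (Euc n)) : Set (Euc n) :=
  {x | δ * ‖x‖ ≤ ‖QCLM H x‖}

/-- The shell (n-annulus) of radii `r` and `R`. -/
def shell (r R : ℝ) : Set (Euc n) :=
  Metric.ball (0 : Euc n) R \ Metric.closedBall (0 : Euc n) r

/-- Conical cap: intersection of a cone and a shell. -/
def conicalCap (δ : ℝ) (H : Submodule ℝ (Euc n)) (r R : ℝ) : Set (Euc n) :=
  angCone δ H ∩ shell r R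

/-- Symmetrized Hausdorff-type distance: sum of the two one-sided deviations. -/
noncomputable def hDistSum (A B : Set (Euc n)) : ℝ :=
  (⨆ y : A, Metric.infDist (y : Euc n) B) + (⨆ y : B, Metric.infDist (y : Euc n) A)

/-- Jones β-number (closed-ball version). -/
noncomputable def betaBar (m : ℕ) (S : Set (Euc n)) (x : Euc n) (r : ℝ) : ℝ :=
  (1/r) * ⨅ H : {H : Submodule ℝ (Euc n) // Module.finrank ℝ H = m},
    ⨆ z : ↥(S ∩ Metric.closedBall x r), ‖QCLM H.1 ((z : Euc n) - x)‖

/-- Jones β-number (open-ball version). -/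
noncomputable def betaOpen (m : ℕ) (S : Set (Euc n)) (x : Euc n) (r : ℝ) : ℝ :=
  (1/r) * ⨅ H : {H : Submodule ℝ (Euc n) // Module.finrank ℝ H = m},
    ⨆ z : ↥(S ∩ Metric.ball x r), ‖QCLM H.1 ((z : Euc n) - x)‖

/-- Reifenberg θ-number (closed-ball version). -/
noncomputable def thetaBar (m : ℕ) (S : Set (Euc n)) (x : Euc n) (r : ℝ) : ℝ :=
  (1/r) * ⨅ H : {H : Submodule ℝ (Euc n) // Module.finrank ℝ H = m},
    hDistSum (S ∩ Metric.closedBall x r)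
      ((fun v => x + v) '' (H.1 : Set (Euc n)) ∩ Metric.closedBall x r)

/-- Reifenberg θ-number (open-ball version). -/
noncomputable def thetaOpen (m : ℕ) (S : Set (Euc n)) (x : Euc n) (r : ℝ) : ℝ :=
  (1/r) * ⨅ H : {H : Submodule ℝ (Euc n) // Module.finrank ℝ H = m},
    hDistSum (S ∩ Metric.ball x r)
      ((fun v => x + v) '' (H.1 : Set (Euc n)) ∩ Metric.ball x r)

/-- Discrete Menger-type curvature of an `(m+2)`-tuple of points. -/
noncomputable def discCurv (m : ℕ) (x : Fin (m+2) → Euc n) : ℝ :=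
  (μH[((m : ℝ) + 1)] (convexHull ℝ (Set.range x))).toReal / Metric.diam (Set.range x) ^ (m+2)

/-- Iterated lower integral over `k` copies of a measure. -/
noncomputable def multiLIntegral (μ : Measure (Euc n)) :
    (k : ℕ) → ((Fin k → Euc n) → ℝ≥0∞) → ℝ≥0∞
  | 0, f => f Fin.elim0
  | k+1, f => ∫⁻ x, multiLIntegral μ k (fun v => f (Fin.cons x v)) ∂μ

/-- The `p`-energy of a set: the integral of `K^p` over `(m+2)`-tuples of points of `S`,
with respect to the `m`-dimensional Hausdorff measure restricted to `S`. -/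
noncomputable def energy (m : ℕ) (p : ℝ) (S : Set (Euc n)) : ℝ≥0∞ :=
  multiLIntegral ((μH[(m : ℝ)]).restrict S) (m+2) fun x => ENNReal.ofReal (discCurv m x ^ p)

/-- The class `V_k(η,d)` of `(η,d)`-voluminous `(k+1)`-simplices. -/
def IsVol (k : ℕ) (η d : ℝ) (x : Fin (k+2) → Euc n) : Prop :=
  (∃ c : Euc n, convexHull ℝ (Set.range x) ⊆ Metric.closedBall c d) ∧
  ENNReal.ofReal ((η * d) ^ k) ≤
    μH[(k : ℝ)] (convexHull ℝ (Set.range fun i : Fin (k+1) => x i.castSucc)) ∧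
  η * d ≤ Metric.infDist (x (Fin.last (k+1)))
    (affineSpan ℝ (Set.range fun i : Fin (k+1) => x i.castSucc) : Set (Euc n))

/-- Pseudo-distance between two simplices given by vertex tuples. -/
noncomputable def simplexDist (k : ℕ) (x y : Fin (k+2) → Euc n) : ℝ :=
  ⨅ σ : Equiv.Perm (Fin (k+2)), ⨆ i, dist (x i) (y (σ i))

/-- Best approximating `m`-planes for `S` in the closed ball `B̄(x,r)`. -/
def BAP (m : ℕ) (S : Set (Euc n)) (x : Euc n) (r : ℝ) : Set (Submodule ℝ (Euc n)) :=
  {H | Module.finrank ℝ H = m ∧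
    hDistSum (S ∩ Metric.closedBall x r)
      ((fun v => x + v) '' (H : Set (Euc n)) ∩ Metric.closedBall x r) ≤ r * thetaBar m S x r}

/-- `m`-fine sets with constants `A`, `R`, `M`. -/
def IsFine (m : ℕ) (S : Set (Euc n)) (A R M : ℝ) : Prop :=
  IsCompact S ∧ 0 < A ∧ 0 < R ∧ 2 ≤ M ∧
  (∀ x ∈ S, ∀ r : ℝ, 0 < r → r ≤ R →
    ENNReal.ofReal (A * r ^ m) ≤ μH[(m : ℝ)] (S ∩ Metric.ball x r)) ∧
  (∀ x ∈ S, ∀ r : ℝ, 0 < r → r ≤ R → thetaBar m S x r ≤ M * betaBar m S x r)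

/-- `T` is the (m-dimensional) tangent plane of `S` at `x`: the limit in the Grassmannian
metric of best approximating planes as the scale tends to `0`. -/
def IsTangentAt (m : ℕ) (S : Set (Euc n)) (x : Euc n) (T : Submodule ℝ (Euc n)) : Prop :=
  Module.finrank ℝ T = m ∧
  ∀ ε > 0, ∃ r₀ > 0, ∀ r : ℝ, 0 < r → r ≤ r₀ → ∀ H ∈ BAP m S x r, dG T H ≤ ε

/-- Gram–Schmidt orthonormalization (Mathlib's `gramSchmidtNormed`). -/
noncomputable def gsNormed {n m : ℕ} (v : Fin m → Euc n) : Fin m → Euc n :=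
  @InnerProductSpace.gramSchmidtNormed ℝ (Euc n) _ _ _ (Fin m) inferInstance inferInstance (inferInstance : WellFoundedLT (Fin m)) v

set_option maxHeartbeats 1000000

noncomputable def gsAux {n m : ℕ} (v : Fin m → Euc n) : Fin m → Euc n :=
  @InnerProductSpace.gramSchmidt ℝ (Euc n) _ _ _ (Fin m) inferInstance inferInstance (inferInstance : WellFoundedLT (Fin m)) v

theorem gsAux_def'' {n m : ℕ} (v : Fin m → Euc n) (i : Fin m) :
    v i = gsAux v i + ∑ j ∈ Finset.Iio i,
      ((inner ℝ (gsAux v j) (v i) : ℝ) / (‖gsAux v j‖ : ℝ) ^ 2) • gsAux v j :=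
  @InnerProductSpace.gramSchmidt_def'' ℝ (Euc n) _ _ _ (Fin m) _ _ (inferInstance : WellFoundedLT (Fin m)) v i

theorem gsAux_ne_zero {n m : ℕ} {v : Fin m → Euc n} (i : Fin m)
    (h : LinearIndependent ℝ v) : gsAux v i ≠ 0 :=
  @InnerProductSpace.gramSchmidt_ne_zero ℝ (Euc n) _ _ _ (Fin m) _ _ (inferInstance : WellFoundedLT (Fin m)) v i h

theorem gsNormed_eq {n m : ℕ} (v : Fin m → Euc n) (i : Fin m) :
    gsNormed v i = (‖gsAux v i‖ : ℝ)⁻¹ • gsAux v i := rfl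

theorem sum_Iio_fin {m : ℕ} (f : ℕ → ℝ) (i : Fin m) :
    ∑ j ∈ Finset.Iio i, f (j:ℕ) = ∑ k ∈ Finset.range (i:ℕ), f k := by
  refine Finset.sum_nbij' (fun j => (j : ℕ)) (fun k => ⟨k % m, Nat.mod_lt _ (Fin.pos i)⟩) ?_ ?_ ?_ ?_ ?_
  · intro a ha; simpa using Finset.mem_Iio.mp ha
  · intro k hk
    have hk' := Finset.mem_range.mp hk
    have hkm : k < m := lt_trans hk' i.isLt
    simp only [Finset.mem_Iio, Fin.lt_def]
    simpa [Nat.mod_eq_of_lt hkm] using hk'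
  · intro a ha
    exact Fin.ext (by simpa using Nat.mod_eq_of_lt a.isLt)
  · intro k hk
    have hkm : k < m := lt_trans (Finset.mem_range.mp hk) i.isLt
    simp [Nat.mod_eq_of_lt hkm]
  · intro a ha; rfl

theorem sum_pow_bound : ∀ N : ℕ, ∑ k ∈ Finset.range N, ((2:ℝ) + 4*7^k) ≤ 7^N := by
  intro N
  induction N with
  | zero => simp
  | succ N ih =>
    have h1 : (1:ℝ) ≤ 7^N := one_le_pow₀ (by norm_num)
    rw [Finset.sum_range_succ, pow_succ]
    linarith


/-- Gram–Schmidt applied to a ρεδ-basis moves each vector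
by at most `(C₁ ε + C₂ δ) ρ`, for constants depending only on `m`. -/
theorem statement1 (m : ℕ) (hm : 0 < m) :
    ∃ C₁ > (0:ℝ), ∃ C₂ > (0:ℝ), ∀ (n : ℕ), m < n →
    ∀ ρ ε δ : ℝ, 0 < ρ → ε ∈ Set.Ioo (0:ℝ) 1 → δ ∈ Set.Ioo (0:ℝ) 1 →
    ∀ V : Submodule ℝ (Euc n), Module.finrank ℝ V = m →
    ∀ v : Fin m → Euc n,
      LinearIndependent ℝ v → Submodule.span ℝ (Set.range v) = V →
      (∀ i, (1 - ε) * ρ ≤ ‖v i‖ ∧ ‖v i‖ ≤ (1 + ε) * ρ) →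
      (∀ i j, i ≠ j → |(inner ℝ (v i) (v j) : ℝ)| ≤ δ * ρ ^ 2) →
      ∀ i, ‖v i - ρ • gsNormed v i‖ ≤ (C₁ * ε + C₂ * δ) * ρ := by
  refine ⟨12 * 7^m, by positivity, 12 * 7^m, by positivity, ?_⟩
  intro n hn ρ ε δ hρ hε hδ V hV v hli hspan hnorm hinner i
  obtain ⟨hε0, hε1⟩ := hε
  obtain ⟨hδ0, hδ1⟩ := hδ
  set s : ℝ := ε + δ with hs
  have hs0 : 0 < s := by positivity
  have h7m : (1:ℝ) ≤ 7^m := one_le_pow₀ (by norm_num)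
  have h7mpos : (0:ℝ) < 7^m := by positivity
  have hunit : ‖gsNormed v i‖ = 1 :=
    @InnerProductSpace.gramSchmidtNormed_unit_length ℝ (Euc n) _ _ _ (Fin m) _ _
      (inferInstance : WellFoundedLT (Fin m)) v i hli
  have hgoal_eq : ((12 * 7^m) * ε + (12 * 7^m) * δ) * ρ = 12 * 7^m * (s * ρ) := by ring
  rw [hgoal_eq]
  rcases le_total s ((1:ℝ)/(4*7^m)) with hst | hst
  · -- main case: s small
    set w : Fin m → Euc n := gsAux v with hw
    have hεs : ε ≤ s := by linarith
    have hδs : δ ≤ s := by linarith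
    have h7ms : 7^m * s ≤ 1/4 := by
      rw [le_div_iff₀ (by positivity : (0:ℝ) < 4*7^m)] at hst
      nlinarith
    have hs14 : s ≤ 1/4 := by nlinarith
    have key : ∀ N : ℕ, ∀ i : Fin m, (i : ℕ) = N →
        ‖v i - w i‖ ≤ 7^(i:ℕ) * (s * ρ) := by
      intro N
      induction N using Nat.strong_induction_on with
      | _ N ih =>
        intro i hiN
        have hterm : ∀ j ∈ Finset.Iio i,
            ‖(⟪w j, v i⟫ / (‖w j‖:ℝ)^2) • w j‖ ≤ (2 + 4*7^(j:ℕ)) * (s * ρ) := by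
          intro j hj
          have hji : j < i := Finset.mem_Iio.mp hj
          have ihj : ‖v j - w j‖ ≤ 7^(j:ℕ) * (s * ρ) :=
            ih (j:ℕ) (by rw [← hiN]; exact hji) j rfl
          have h7j : (7:ℝ)^(j:ℕ) ≤ 7^m := pow_le_pow_right₀ (by norm_num) j.isLt.le
          have h7j1 : (1:ℝ) ≤ 7^(j:ℕ) := one_le_pow₀ (by norm_num)
          have hvjw : 7^(j:ℕ) * (s * ρ) ≤ ρ/4 := by
            have : 7^(j:ℕ) * s ≤ 1/4 := le_trans (by nlinarith) h7ms
            nlinarith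
          have hwjlow : ρ/2 ≤ ‖w j‖ := by
            have h1 : ‖v j‖ - ‖v j - w j‖ ≤ ‖w j‖ := by
              have := norm_sub_norm_le (v j) (w j)
              have h2 : ‖v j‖ - ‖w j‖ ≤ ‖v j - w j‖ := le_trans (le_abs_self _) (abs_norm_sub_norm_le _ _)
              linarith
            have h3 : (1-ε)*ρ ≤ ‖v j‖ := (hnorm j).1
            have h4 : ε * ρ ≤ ρ/4 := by nlinarith
            nlinarith
          have hwjpos : (0:ℝ) < ‖w j‖ := lt_of_lt_of_le (by linarith) hwjlow
          -- inner product bound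
          have hinn : |⟪w j, v i⟫| ≤ δ*ρ^2 + 7^(j:ℕ) * (s*ρ) * (2*ρ) := by
            have hd : ⟪w j, v i⟫ = ⟪v j, v i⟫ - ⟪v j - w j, v i⟫ := by
              rw [inner_sub_left]; ring
            have h1 : |⟪v j, v i⟫| ≤ δ * ρ^2 := hinner j i (ne_of_lt hji)
            have h2 : |⟪v j - w j, v i⟫| ≤ ‖v j - w j‖ * ‖v i‖ :=
              abs_real_inner_le_norm _ _
            have h3 : ‖v i‖ ≤ 2*ρ := by nlinarith [(hnorm i).2]
            have h4 : ‖v j - w j‖ * ‖v i‖ ≤ 7^(j:ℕ) * (s*ρ) * (2*ρ) := by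
              apply mul_le_mul ihj h3 (norm_nonneg _) (by positivity)
            calc |⟪w j, v i⟫| = |⟪v j, v i⟫ - ⟪v j - w j, v i⟫| := by rw [hd]
              _ ≤ |⟪v j, v i⟫| + |⟪v j - w j, v i⟫| := abs_sub _ _
              _ ≤ δ*ρ^2 + 7^(j:ℕ) * (s*ρ) * (2*ρ) := by linarith
          have hnormterm : ‖(⟪w j, v i⟫ / (‖w j‖:ℝ)^2) • w j‖ = |⟪w j, v i⟫| / ‖w j‖ := by
            rw [norm_smul, Real.norm_eq_abs, abs_div, abs_pow, abs_norm]
            field_simp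
          rw [hnormterm]
          calc |⟪w j, v i⟫| / ‖w j‖
              ≤ (δ*ρ^2 + 7^(j:ℕ) * (s*ρ) * (2*ρ)) / (ρ/2) := by
                apply div_le_div₀ (by positivity) hinn (by linarith) hwjlow
            _ = (2*δ + 4*7^(j:ℕ)*s) * ρ := by field_simp; ring
            _ ≤ (2 + 4*7^(j:ℕ)) * (s * ρ) := by nlinarith
        -- express v i - w i as the sum
        have hvw : v i - w i = ∑ j ∈ Finset.Iio i,
            (⟪w j, v i⟫ / (‖w j‖:ℝ)^2) • w j := by
          conv_lhs => rw [gsAux_def'' v i]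
          rw [hw]
          abel
        calc ‖v i - w i‖ = ‖∑ j ∈ Finset.Iio i, (⟪w j, v i⟫ / (‖w j‖:ℝ)^2) • w j‖ := by rw [hvw]
          _ ≤ ∑ j ∈ Finset.Iio i, ‖(⟪w j, v i⟫ / (‖w j‖:ℝ)^2) • w j‖ := norm_sum_le _ _
          _ ≤ ∑ j ∈ Finset.Iio i, (2 + 4*7^(j:ℕ)) * (s * ρ) := Finset.sum_le_sum hterm
          _ = (∑ k ∈ Finset.range (i:ℕ), ((2:ℝ) + 4*7^k)) * (s * ρ) := by
              rw [sum_Iio_fin (fun k => ((2:ℝ) + 4*7^k) * (s*ρ)) i, ← Finset.sum_mul]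
          _ ≤ 7^(i:ℕ) * (s * ρ) := by
              apply mul_le_mul_of_nonneg_right (sum_pow_bound _) (by positivity)
    -- main case conclusion
    have hkey := key (i:ℕ) i rfl
    have h7i : (7:ℝ)^(i:ℕ) ≤ 7^m := pow_le_pow_right₀ (by norm_num) i.isLt.le
    have hkey' : ‖v i - w i‖ ≤ 7^m * (s * ρ) :=
      le_trans hkey (mul_le_mul_of_nonneg_right h7i (by positivity))
    have hwne : w i ≠ 0 := gsAux_ne_zero i hli
    have hwnorm : (0:ℝ) < ‖w i‖ := norm_pos_iff.mpr hwne
    have hwu : w i = ‖w i‖ • gsNormed v i := by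
      have : gsNormed v i = (‖w i‖ : ℝ)⁻¹ • w i := gsNormed_eq v i
      rw [this, smul_smul, mul_inv_cancel₀ (ne_of_gt hwnorm), one_smul]
    have hsubsmul : w i - ρ • gsNormed v i = (‖w i‖ - ρ) • gsNormed v i := by
      rw [sub_smul, ← hwu]
    have hdiff2 : ‖w i - ρ • gsNormed v i‖ = |‖w i‖ - ρ| := by
      rw [hsubsmul, norm_smul, Real.norm_eq_abs, hunit, mul_one]
    have habs1 : |‖w i‖ - ‖v i‖| ≤ ‖w i - v i‖ := abs_norm_sub_norm_le _ _
    have habs2 : |‖v i‖ - ρ| ≤ ε * ρ := by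
      rw [abs_le]
      constructor <;> nlinarith [(hnorm i).1, (hnorm i).2]
    have hwvi : ‖w i - v i‖ = ‖v i - w i‖ := norm_sub_rev _ _
    have hfinal : ‖v i - ρ • gsNormed v i‖ ≤ 7^m*(s*ρ) + (7^m*(s*ρ) + ε*ρ) := by
      calc ‖v i - ρ • gsNormed v i‖
          ≤ ‖v i - w i‖ + ‖w i - ρ • gsNormed v i‖ := by
            have := norm_add_le (v i - w i) (w i - ρ • gsNormed v i)
            simpa using this
        _ ≤ 7^m*(s*ρ) + |‖w i‖ - ρ| := by rw [hdiff2]; linarith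
        _ ≤ 7^m*(s*ρ) + (7^m*(s*ρ) + ε*ρ) := by
            have : |‖w i‖ - ρ| ≤ |‖w i‖ - ‖v i‖| + |‖v i‖ - ρ| := by
              have := abs_sub_abs_le_abs_sub (‖w i‖ - ρ) 0
              calc |‖w i‖ - ρ| = |(‖w i‖ - ‖v i‖) + (‖v i‖ - ρ)| := by ring_nf
                _ ≤ |‖w i‖ - ‖v i‖| + |‖v i‖ - ρ| := abs_add_le _ _
            rw [hwvi] at habs1
            linarith
    have he1 : ε * ρ ≤ s * ρ := mul_le_mul_of_nonneg_right hεs hρ.le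
    have he2 : s * ρ ≤ 7^m * (s*ρ) := le_mul_of_one_le_left (by positivity) h7m
    have he3 : (0:ℝ) ≤ 7^m * (s*ρ) := by positivity
    linarith
  · -- trivial case: s large
    have h3 : ‖v i - ρ • gsNormed v i‖ ≤ 3 * ρ := by
      calc ‖v i - ρ • gsNormed v i‖ ≤ ‖v i‖ + ‖ρ • gsNormed v i‖ := norm_sub_le _ _
        _ = ‖v i‖ + ρ := by rw [norm_smul, hunit, Real.norm_eq_abs, abs_of_pos hρ, mul_one]
        _ ≤ (1+ε)*ρ + ρ := by linarith [(hnorm i).2]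
        _ ≤ 3 * ρ := by nlinarith
    have h4 : 3 * ρ ≤ 12 * 7^m * (s * ρ) := by
      have h5 : (3:ℝ) ≤ 12 * 7^m * s := by
        rw [div_le_iff₀ (by positivity : (0:ℝ) < 4*7^m)] at hst
        nlinarith
      nlinarith
    linarith
end
end

section
/- There exists ε₀ = ε₀(m) > 0 such that for all ε, δ ∈ (0, ε₀) there exists a constant C₄ = C₄(m, ε, δ) > 0 with the following property: for every ρ > 0 and ϑ ∈ (0,1), every m-dimensional linear subspace V of ℝⁿ with a ρεδ-basis (v₁,…,v_m), and every m-dimensional linear subspace U of ℝⁿ with a basis (u₁,…,u_m) satisfying |u_i − v_i| ≤ ϑ·ρ for all i = 1,…,m, one has d_G(U,V) ≤ C₄·ϑ. -/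
open Metric MeasureTheory Filter
open scoped RealInnerProductSpace ENNReal NNReal

noncomputable section

variable {n : ℕ}

section AuxStatement3

variable {n : ℕ}

private lemma s3_le_of_sq_le_sq {a c : ℝ} (ha : 0 ≤ a) (hc : 0 ≤ c) (h : a ^ 2 ≤ c ^ 2) :
    a ≤ c := by nlinarith

private lemma s3_projCLM_apply (U : Submodule ℝ (Euc n)) (x : Euc n) :
    projCLM U x = (U.orthogonalProjectionOnto x : Euc n) := rfl

private lemma s3_projCLM_mem (U : Submodule ℝ (Euc n)) (x : Euc n) : projCLM U x ∈ U := by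
  rw [s3_projCLM_apply]; exact (U.orthogonalProjectionOnto x).2

private lemma s3_proj_min (U : Submodule ℝ (Euc n)) (y w : Euc n) (hw : w ∈ U) :
    ‖y - projCLM U y‖ ≤ ‖y - w‖ := by
  have h2 : ⟪y - projCLM U y, projCLM U y - w⟫ = 0 := by
    rw [s3_projCLM_apply]
    exact Submodule.starProjection_inner_eq_zero (K := U) y _ (U.sub_mem (s3_projCLM_mem U y) hw)
  have h1 : y - w = (y - projCLM U y) + (projCLM U y - w) := by abel
  have h3 : ‖y - w‖ ^ 2 = ‖y - projCLM U y‖ ^ 2 + ‖projCLM U y - w‖ ^ 2 := by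
    rw [h1, norm_add_sq_real, h2]; ring
  refine s3_le_of_sq_le_sq (norm_nonneg _) (norm_nonneg _) ?_
  nlinarith [sq_nonneg ‖projCLM U y - w‖]

private lemma s3_proj_norm_le (U : Submodule ℝ (Euc n)) (x : Euc n) :
    ‖projCLM U x‖ ≤ ‖x‖ := by
  have h2 : ⟪x - projCLM U x, projCLM U x⟫ = 0 := by
    rw [s3_projCLM_apply]
    exact Submodule.starProjection_inner_eq_zero (K := U) x _ (s3_projCLM_mem U x)
  have h1 : x = (x - projCLM U x) + projCLM U x := by abel
  have h3 : ‖x‖ ^ 2 = ‖x - projCLM U x‖ ^ 2 + ‖projCLM U x‖ ^ 2 := by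
    conv_lhs => rw [h1]
    rw [norm_add_sq_real, h2]; ring
  refine s3_le_of_sq_le_sq (norm_nonneg _) (norm_nonneg _) ?_
  nlinarith [sq_nonneg ‖x - projCLM U x‖]

private lemma s3_proj_perp_bound {U V : Submodule ℝ (Euc n)} {a : ℝ} (ha : 0 ≤ a)
    (hU : ∀ x ∈ U, ∃ w ∈ V, ‖x - w‖ ≤ a * ‖x‖) {y : Euc n} (hy : y ∈ Vᗮ) :
    ‖projCLM U y‖ ≤ a * ‖y‖ := by
  set p := projCLM U y with hp
  obtain ⟨w, hwV, hw⟩ := hU p (s3_projCLM_mem U y)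
  have h1 : ⟪y - p, p⟫ = 0 := by
    rw [hp, s3_projCLM_apply]
    exact Submodule.starProjection_inner_eq_zero (K := U) y _ (s3_projCLM_mem U y)
  rw [inner_sub_left] at h1
  have h2 : ⟪p, y⟫ = ‖p‖ ^ 2 := by
    rw [real_inner_comm]
    rw [real_inner_self_eq_norm_sq] at h1
    linarith
  have h3 : ⟪w, y⟫ = 0 := (Submodule.mem_orthogonal _ _).mp hy w hwV
  have h4 : ‖p‖ ^ 2 = ⟪p - w, y⟫ := by rw [inner_sub_left, h2, h3]; ring
  have h5 : ⟪p - w, y⟫ ≤ ‖p - w‖ * ‖y‖ := real_inner_le_norm _ _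
  have h6 : ‖p‖ ^ 2 ≤ a * ‖p‖ * ‖y‖ := by
    calc ‖p‖ ^ 2 = ⟪p - w, y⟫ := h4
    _ ≤ ‖p - w‖ * ‖y‖ := h5
    _ ≤ a * ‖p‖ * ‖y‖ := by
        exact mul_le_mul_of_nonneg_right hw (norm_nonneg _)
  rcases eq_or_lt_of_le (norm_nonneg p) with h0 | h0
  · rw [← h0]; positivity
  · nlinarith [norm_nonneg y]

private lemma s3_dG_le {U V : Submodule ℝ (Euc n)} {a b : ℝ} (ha : 0 ≤ a) (hb : 0 ≤ b)
    (hU : ∀ x ∈ U, ∃ w ∈ V, ‖x - w‖ ≤ a * ‖x‖)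
    (hV : ∀ y ∈ V, ∃ w ∈ U, ‖y - w‖ ≤ b * ‖y‖) :
    dG U V ≤ a + b := by
  refine ContinuousLinearMap.opNorm_le_bound _ (by linarith) fun x => ?_
  have hdecomp : (projCLM U - projCLM V) x
      = projCLM U (x - projCLM V x) - (projCLM V x - projCLM U (projCLM V x)) := by
    rw [ContinuousLinearMap.sub_apply, map_sub]; abel
  have horth : x - projCLM V x ∈ Vᗮ := by
    rw [s3_projCLM_apply]; exact Submodule.sub_starProjection_mem_orthogonal (K := V) x
  have h1 : ‖projCLM U (x - projCLM V x)‖ ≤ a * ‖x‖ := by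
    calc ‖projCLM U (x - projCLM V x)‖ ≤ a * ‖x - projCLM V x‖ :=
          s3_proj_perp_bound ha hU horth
    _ ≤ a * ‖x‖ := by
        have := s3_proj_min V x 0 V.zero_mem
        rw [sub_zero] at this
        exact mul_le_mul_of_nonneg_left this ha
  have h2 : ‖projCLM V x - projCLM U (projCLM V x)‖ ≤ b * ‖x‖ := by
    obtain ⟨w, hwU, hw⟩ := hV (projCLM V x) (s3_projCLM_mem V x)
    calc ‖projCLM V x - projCLM U (projCLM V x)‖ ≤ ‖projCLM V x - w‖ :=
          s3_proj_min U (projCLM V x) w hwU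
    _ ≤ b * ‖projCLM V x‖ := hw
    _ ≤ b * ‖x‖ := mul_le_mul_of_nonneg_left (s3_proj_norm_le V x) hb
  calc ‖(projCLM U - projCLM V) x‖
      ≤ ‖projCLM U (x - projCLM V x)‖ + ‖projCLM V x - projCLM U (projCLM V x)‖ := by
        rw [hdecomp]; exact norm_sub_le _ _
  _ ≤ a * ‖x‖ + b * ‖x‖ := add_le_add h1 h2
  _ = (a + b) * ‖x‖ := by ring

set_option maxHeartbeats 1000000 in
private lemma s3_gram_lower {m : ℕ} (hm : 0 < m) {ε δ ρ : ℝ} (hρ : 0 < ρ)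
    (hε0 : 0 < ε) (hε : ε < 1 / (4 * m)) (hδ0 : 0 < δ) (hδ : δ < 1 / (4 * m))
    {v : Fin m → Euc n}
    (hvn : ∀ i, (1 - ε) * ρ ≤ ‖v i‖ ∧ ‖v i‖ ≤ (1 + ε) * ρ)
    (hvo : ∀ i j, i ≠ j → |(inner ℝ (v i) (v j) : ℝ)| ≤ δ * ρ ^ 2)
    (b : Fin m → ℝ) :
    ρ ^ 2 / 4 * (∑ i, (b i) ^ 2) ≤ ‖∑ i, b i • v i‖ ^ 2 := by
  have hmR : (1 : ℝ) ≤ m := by exact_mod_cast hm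
  have h4m : (0 : ℝ) < 4 * m := by positivity
  have hε' : ε * (4 * m) < 1 := by
    have := (lt_div_iff₀ h4m).mp hε; linarith
  have hδ' : δ * (4 * m) < 1 := by
    have := (lt_div_iff₀ h4m).mp hδ; linarith
  set A := ∑ i, (b i) ^ 2 with hA_def
  have hA : 0 ≤ A := Finset.sum_nonneg fun i _ => sq_nonneg _
  set T := ∑ i, |b i| with hT_def
  have hexp : ‖∑ i, b i • v i‖ ^ 2 = ∑ i, ∑ j, b i * b j * ⟪v i, v j⟫ := by
    calc ‖∑ i, b i • v i‖ ^ 2 = ⟪∑ i, b i • v i, ∑ j, b j • v j⟫ :=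
          (real_inner_self_eq_norm_sq _).symm
    _ = ∑ i, ∑ j, b i * b j * ⟪v i, v j⟫ := by
        rw [sum_inner]
        refine Finset.sum_congr rfl fun i _ => ?_
        rw [inner_sum]
        refine Finset.sum_congr rfl fun j _ => ?_
        rw [real_inner_smul_left, real_inner_smul_right]; ring
  have key : ∀ i : Fin m, (1 - ε) ^ 2 * ρ ^ 2 * (b i) ^ 2
      - δ * ρ ^ 2 * (∑ j ∈ Finset.univ.erase i, |b i| * |b j|)
      ≤ ∑ j, b i * b j * ⟪v i, v j⟫ := by
    intro i
    rw [← Finset.add_sum_erase _ _ (Finset.mem_univ i)]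
    have hdiag : (1 - ε) ^ 2 * ρ ^ 2 * (b i) ^ 2 ≤ b i * b i * ⟪v i, v i⟫ := by
      rw [real_inner_self_eq_norm_sq]
      have h1 := (hvn i).1
      have h0 : 0 ≤ (1 - ε) * ρ := by nlinarith
      have h2 : ((1 - ε) * ρ) ^ 2 ≤ ‖v i‖ ^ 2 := by nlinarith [norm_nonneg (v i)]
      nlinarith [sq_nonneg (b i)]
    have hoff : ∀ j ∈ Finset.univ.erase i,
        -(δ * ρ ^ 2 * (|b i| * |b j|)) ≤ b i * b j * ⟪v i, v j⟫ := by
      intro j hj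
      have hij : i ≠ j := (Finset.ne_of_mem_erase hj).symm
      have h1 := hvo i j hij
      have h2 : |b i * b j * ⟪v i, v j⟫| ≤ |b i| * |b j| * (δ * ρ ^ 2) := by
        rw [abs_mul, abs_mul]
        have := mul_le_mul_of_nonneg_left h1 (mul_nonneg (abs_nonneg (b i)) (abs_nonneg (b j)))
        linarith
      have h3 := neg_abs_le (b i * b j * ⟪v i, v j⟫)
      nlinarith
    have hsum := Finset.sum_le_sum hoff
    have h2 : ∑ j ∈ Finset.univ.erase i, -(δ * ρ ^ 2 * (|b i| * |b j|))
        = -(δ * ρ ^ 2 * ∑ j ∈ Finset.univ.erase i, |b i| * |b j|) := by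
      rw [Finset.mul_sum]; exact Finset.sum_neg_distrib _
    rw [h2] at hsum
    linarith
  have total : (1 - ε) ^ 2 * ρ ^ 2 * A
      - δ * ρ ^ 2 * (∑ i, ∑ j ∈ Finset.univ.erase i, |b i| * |b j|)
      ≤ ∑ i, ∑ j, b i * b j * ⟪v i, v j⟫ := by
    have := Finset.sum_le_sum fun i (_ : i ∈ Finset.univ) => key i
    calc (1 - ε) ^ 2 * ρ ^ 2 * A
        - δ * ρ ^ 2 * (∑ i, ∑ j ∈ Finset.univ.erase i, |b i| * |b j|)
        = ∑ i, ((1 - ε) ^ 2 * ρ ^ 2 * (b i) ^ 2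
          - δ * ρ ^ 2 * (∑ j ∈ Finset.univ.erase i, |b i| * |b j|)) := by
          rw [Finset.sum_sub_distrib, ← Finset.mul_sum, ← Finset.mul_sum]
    _ ≤ _ := this
  have hTsq : ∑ i, ∑ j ∈ Finset.univ.erase i, |b i| * |b j| = T ^ 2 - A := by
    have h5 : T ^ 2 = ∑ i, ∑ j, |b i| * |b j| := by
      rw [hT_def, sq, Finset.sum_mul_sum]
    have h6 : ∀ i : Fin m, ∑ j, |b i| * |b j|
        = (b i) ^ 2 + ∑ j ∈ Finset.univ.erase i, |b i| * |b j| := by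
      intro i
      rw [← Finset.add_sum_erase _ _ (Finset.mem_univ i), abs_mul_abs_self, sq]
    rw [h5, Finset.sum_congr rfl fun i _ => h6 i, Finset.sum_add_distrib]
    rw [hA_def]; ring
  have hT2 : T ^ 2 ≤ m * A := by
    have := sq_sum_le_card_mul_sum_sq (s := (Finset.univ : Finset (Fin m))) (f := fun i => |b i|)
    simpa [hT_def, hA_def, sq_abs, Finset.card_univ] using this
  rw [hexp]
  rw [hTsq] at total
  have hTA : T ^ 2 - A ≤ ((m : ℝ) - 1) * A := by nlinarith
  have step1 : δ * ρ ^ 2 * (T ^ 2 - A) ≤ ρ ^ 2 * (1 / 4 * A) := by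
    calc δ * ρ ^ 2 * (T ^ 2 - A) ≤ δ * ρ ^ 2 * (((m : ℝ) - 1) * A) := by
          exact mul_le_mul_of_nonneg_left hTA (by positivity)
    _ = ρ ^ 2 * (δ * ((m : ℝ) - 1) * A) := by ring
    _ ≤ ρ ^ 2 * (1 / 4 * A) := by
        refine mul_le_mul_of_nonneg_left ?_ (sq_nonneg ρ)
        have : δ * ((m : ℝ) - 1) ≤ 1 / 4 := by nlinarith
        nlinarith
  have step2 : ρ ^ 2 * (1 / 2 * A) ≤ (1 - ε) ^ 2 * ρ ^ 2 * A := by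
    have h7 : (1 : ℝ) / 2 * A ≤ (1 - ε) ^ 2 * A := by
      have : (1 : ℝ) / 2 ≤ (1 - ε) ^ 2 := by nlinarith
      nlinarith
    nlinarith [sq_nonneg ρ]
  ring_nf at total step1 step2 ⊢
  linarith

end AuxStatement3

set_option maxHeartbeats 2000000 in
/-- comparing a ρεδ-basis of `V` with a nearby basis of `U`
controls the Grassmannian distance. -/
theorem statement3 (m : ℕ) (hm : 0 < m) :
    ∃ ε₀ : ℝ, 0 < ε₀ ∧ ε₀ ≤ 1 ∧
    ∀ ε δ : ℝ, ε ∈ Set.Ioo 0 ε₀ → δ ∈ Set.Ioo 0 ε₀ →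
    ∃ C₄ > (0:ℝ), ∀ (n : ℕ), m < n →
    ∀ ρ ϑ : ℝ, 0 < ρ → ϑ ∈ Set.Ioo (0:ℝ) 1 →
    ∀ (U V : Submodule ℝ (Euc n)),
      Module.finrank ℝ U = m → Module.finrank ℝ V = m →
    ∀ v u : Fin m → Euc n,
      LinearIndependent ℝ v → Submodule.span ℝ (Set.range v) = V →
      (∀ i, (1 - ε) * ρ ≤ ‖v i‖ ∧ ‖v i‖ ≤ (1 + ε) * ρ) →
      (∀ i j, i ≠ j → |(inner ℝ (v i) (v j) : ℝ)| ≤ δ * ρ ^ 2) →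
      LinearIndependent ℝ u → Submodule.span ℝ (Set.range u) = U →
      (∀ i, ‖u i - v i‖ ≤ ϑ * ρ) →
      dG U V ≤ C₄ * ϑ := by
  have hmR : (1 : ℝ) ≤ m := by exact_mod_cast hm
  have h4m : (0 : ℝ) < 4 * m := by positivity
  refine ⟨1 / (4 * m), by positivity, ?_, ?_⟩
  · rw [div_le_one h4m]; linarith
  intro ε δ hε hδ
  refine ⟨8 * m, by positivity, ?_⟩
  intro n hn ρ ϑ hρ hϑ U V hUr hVr v u hvli hvspan hvn hvo huli huspan huv
  have hϑ0 : 0 < ϑ := hϑ.1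
  set sm := Real.sqrt m with hsm_def
  have hsm0 : 0 ≤ sm := Real.sqrt_nonneg _
  have hsm2 : sm ^ 2 = m := Real.sq_sqrt (by positivity)
  have hsmm : sm ≤ m := by nlinarith
  rcases lt_or_ge ϑ (1 / (4 * m)) with hsmall | hbig
  · -- small ϑ: the quantitative estimate
    have gram := s3_gram_lower (n := n) hm hρ hε.1 hε.2 hδ.1 hδ.2 hvn hvo
    have hϑ4 : ϑ * (4 * m) < 1 := by
      have := (lt_div_iff₀ h4m).mp hsmall; linarith
    have habs : ∀ b : Fin m → ℝ, (∑ i, |b i|) ≤ sm * Real.sqrt (∑ i, (b i) ^ 2) := by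
      intro b
      have hA : (0 : ℝ) ≤ ∑ i, (b i) ^ 2 := Finset.sum_nonneg fun i _ => sq_nonneg _
      have h1 : (∑ i, |b i|) ^ 2 ≤ (m : ℝ) * ∑ i, (b i) ^ 2 := by
        have := sq_sum_le_card_mul_sum_sq (s := (Finset.univ : Finset (Fin m)))
          (f := fun i => |b i|)
        simpa [sq_abs, Finset.card_univ] using this
      refine s3_le_of_sq_le_sq (Finset.sum_nonneg fun i _ => abs_nonneg _) (by positivity) ?_
      rw [mul_pow, hsm2, Real.sq_sqrt hA]; exact h1
    have hb_norm : ∀ b : Fin m → ℝ,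
        ρ / 2 * Real.sqrt (∑ i, (b i) ^ 2) ≤ ‖∑ i, b i • v i‖ := by
      intro b
      have hA : (0 : ℝ) ≤ ∑ i, (b i) ^ 2 := Finset.sum_nonneg fun i _ => sq_nonneg _
      refine s3_le_of_sq_le_sq (by positivity) (norm_nonneg _) ?_
      rw [mul_pow, Real.sq_sqrt hA]
      have := gram b
      nlinarith
    have hdiff : ∀ b : Fin m → ℝ,
        ‖∑ i, b i • (u i - v i)‖ ≤ sm * Real.sqrt (∑ i, (b i) ^ 2) * (ϑ * ρ) := by
      intro b
      calc ‖∑ i, b i • (u i - v i)‖ ≤ ∑ i, ‖b i • (u i - v i)‖ := norm_sum_le _ _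
      _ = ∑ i, |b i| * ‖u i - v i‖ := by
          refine Finset.sum_congr rfl fun i _ => ?_
          rw [norm_smul, Real.norm_eq_abs]
      _ ≤ ∑ i, |b i| * (ϑ * ρ) := Finset.sum_le_sum fun i _ =>
          mul_le_mul_of_nonneg_left (huv i) (abs_nonneg _)
      _ = (∑ i, |b i|) * (ϑ * ρ) := by rw [Finset.sum_mul]
      _ ≤ sm * Real.sqrt (∑ i, (b i) ^ 2) * (ϑ * ρ) :=
          mul_le_mul_of_nonneg_right (habs b) (by positivity)
    have hu_norm : ∀ a : Fin m → ℝ,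
        ρ / 4 * Real.sqrt (∑ i, (a i) ^ 2) ≤ ‖∑ i, a i • u i‖ := by
      intro a
      have hsa : 0 ≤ Real.sqrt (∑ i, (a i) ^ 2) := Real.sqrt_nonneg _
      have h3 : (∑ i, a i • u i) = (∑ i, a i • v i) + ∑ i, a i • (u i - v i) := by
        rw [← Finset.sum_add_distrib]
        refine Finset.sum_congr rfl fun i _ => ?_
        rw [← smul_add]; congr 1; abel
      have h4 : ‖∑ i, a i • v i‖ ≤ ‖∑ i, a i • u i‖ + ‖∑ i, a i • (u i - v i)‖ := by
        calc ‖∑ i, a i • v i‖ = ‖(∑ i, a i • u i) - ∑ i, a i • (u i - v i)‖ := by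
              rw [h3]; congr 1; abel
        _ ≤ _ := norm_sub_le _ _
      have hsmϑ : sm * ϑ ≤ 1 / 4 := by
        nlinarith [mul_nonneg (sub_nonneg.mpr hsmm) hϑ0.le]
      have hge := hb_norm a
      have hd := hdiff a
      nlinarith [mul_nonneg (mul_nonneg (sub_nonneg.mpr hsmϑ) hρ.le) hsa]
    have hvmem : ∀ b : Fin m → ℝ, (∑ i, b i • v i) ∈ V := fun b =>
      Submodule.sum_mem _ fun i _ =>
        Submodule.smul_mem _ _ (hvspan ▸ Submodule.subset_span ⟨i, rfl⟩)
    have humem : ∀ a : Fin m → ℝ, (∑ i, a i • u i) ∈ U := fun a =>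
      Submodule.sum_mem _ fun i _ =>
        Submodule.smul_mem _ _ (huspan ▸ Submodule.subset_span ⟨i, rfl⟩)
    have hUside : ∀ x ∈ U, ∃ w ∈ V, ‖x - w‖ ≤ 4 * sm * ϑ * ‖x‖ := by
      intro x hx
      rw [← huspan] at hx
      obtain ⟨a, ha⟩ := (Submodule.mem_span_range_iff_exists_fun ℝ).mp hx
      refine ⟨∑ i, a i • v i, hvmem a, ?_⟩
      have hxd : x - ∑ i, a i • v i = ∑ i, a i • (u i - v i) := by
        rw [← ha, ← Finset.sum_sub_distrib]
        exact Finset.sum_congr rfl fun i _ => (smul_sub _ _ _).symm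
      set s := Real.sqrt (∑ i, (a i) ^ 2) with hs_def
      have hs0 : 0 ≤ s := Real.sqrt_nonneg _
      have h2 : ρ / 4 * s ≤ ‖x‖ := by rw [← ha]; exact hu_norm a
      calc ‖x - ∑ i, a i • v i‖ ≤ sm * s * (ϑ * ρ) := by rw [hxd]; exact hdiff a
      _ = (sm * ϑ) * (ρ * s) := by ring
      _ ≤ (sm * ϑ) * (4 * ‖x‖) :=
          mul_le_mul_of_nonneg_left (by linarith) (mul_nonneg hsm0 hϑ0.le)
      _ = 4 * sm * ϑ * ‖x‖ := by ring
    have hVside : ∀ y ∈ V, ∃ w ∈ U, ‖y - w‖ ≤ 2 * sm * ϑ * ‖y‖ := by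
      intro y hy
      rw [← hvspan] at hy
      obtain ⟨b, hb⟩ := (Submodule.mem_span_range_iff_exists_fun ℝ).mp hy
      refine ⟨∑ i, b i • u i, humem b, ?_⟩
      have hyd : y - ∑ i, b i • u i = -∑ i, b i • (u i - v i) := by
        rw [← hb, ← Finset.sum_sub_distrib, ← Finset.sum_neg_distrib]
        refine Finset.sum_congr rfl fun i _ => ?_
        rw [← smul_neg, ← smul_sub, neg_sub]
      set s := Real.sqrt (∑ i, (b i) ^ 2) with hs_def
      have hs0 : 0 ≤ s := Real.sqrt_nonneg _
      have h2 : ρ / 2 * s ≤ ‖y‖ := by rw [← hb]; exact hb_norm b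
      calc ‖y - ∑ i, b i • u i‖ = ‖∑ i, b i • (u i - v i)‖ := by rw [hyd, norm_neg]
      _ ≤ sm * s * (ϑ * ρ) := hdiff b
      _ = (sm * ϑ) * (ρ * s) := by ring
      _ ≤ (sm * ϑ) * (2 * ‖y‖) :=
          mul_le_mul_of_nonneg_left (by linarith) (mul_nonneg hsm0 hϑ0.le)
      _ = 2 * sm * ϑ * ‖y‖ := by ring
    have hfinal := s3_dG_le (by positivity) (by positivity) hUside hVside
    calc dG U V ≤ 4 * sm * ϑ + 2 * sm * ϑ := hfinal
    _ ≤ 8 * m * ϑ := by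
        nlinarith [mul_nonneg (sub_nonneg.mpr hsmm) hϑ0.le,
          mul_nonneg (by positivity : (0:ℝ) ≤ (m:ℝ)) hϑ0.le]
  · -- large ϑ: use the trivial bound dG ≤ 2
    have h2 : 1 ≤ ϑ * (4 * m) := by
      have := (div_le_iff₀ h4m).mp hbig; linarith
    have hd2 : dG U V ≤ 2 := by
      refine ContinuousLinearMap.opNorm_le_bound _ (by norm_num) fun x => ?_
      rw [ContinuousLinearMap.sub_apply]
      calc ‖projCLM U x - projCLM V x‖ ≤ ‖projCLM U x‖ + ‖projCLM V x‖ := norm_sub_le _ _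
      _ ≤ 2 * ‖x‖ := by
          linarith [s3_proj_norm_le U x, s3_proj_norm_le V x]
    nlinarith
end
end
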